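/- Any Sidon set contained in {1, 2, ..., n} has cardinality strictly less than n^(1/2) + n^(1/4) + 1/2. -/
import Mathlib

open Finset

lemma sidon_key (n m : ℕ) (hn : 0 < n) (hm : 0 < m) (S : Finset ℕ)
    (hS : S ⊆ Finset.Icc 1 n)
    (hsidon : ∀ a ∈ S, ∀ b ∈ S, ∀ c ∈ S, ∀ d ∈ S,
      a + b = c + d → (a = c ∧ b = d) ∨ (a = d ∧ b = c)) :
    S.card ^ 2 * m ≤ (n + m - 1) * (m - 1 + S.card) := by
  classical
  set k := S.card with hk
  have hmem : ∀ s ∈ S, 1 ≤ s ∧ s ≤ n := by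
    intro s hs
    simpa [Finset.mem_Icc] using hS hs
  set A : ℕ → ℕ := fun t => (S.filter (fun s => s ≤ t + 1 ∧ t + 2 ≤ s + m)).card with hA
  set T : Finset ℕ := Finset.range (n + m - 1) with hT
  -- Fact 1 : ∑ A = k * m
  have fact1 : ∑ t ∈ T, A t = k * m := by
    have h1 : ∑ t ∈ T, A t = ∑ s ∈ S, (T.filter (fun t => s ≤ t + 1 ∧ t + 2 ≤ s + m)).card := by
      simp only [hA, Finset.card_filter]
      rw [Finset.sum_comm]
    rw [h1]
    have h2 : ∀ s ∈ S, (T.filter (fun t => s ≤ t + 1 ∧ t + 2 ≤ s + m)).card = m := by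
      intro s hs
      obtain ⟨h1', h2'⟩ := hmem s hs
      have he : T.filter (fun t => s ≤ t + 1 ∧ t + 2 ≤ s + m) = Finset.Icc (s - 1) (s + m - 2) := by
        ext t
        simp only [Finset.mem_filter, Finset.mem_range, Finset.mem_Icc, hT]
        omega
      rw [he, Nat.card_Icc]
      omega
    rw [Finset.sum_congr rfl h2, Finset.sum_const, smul_eq_mul]
  -- the Gauss-type bound
  set B : ℕ := ∑ d ∈ Finset.Icc 1 (m - 1), (m - d) with hB
  have hB2 : B + B = m * (m - 1) := by
    have h1 : B = ∑ d ∈ Finset.Icc 1 (m - 1), d := by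
      rw [hB]
      apply Finset.sum_nbij' (fun d => m - d) (fun d => m - d)
      all_goals intro a ha <;> simp only [Finset.mem_Icc] at * <;> omega
    have h2 : ∑ d ∈ Finset.Icc 1 (m - 1), d = ∑ d ∈ Finset.range m, d := by
      have he : Finset.Icc 1 (m - 1) = Finset.Ico 1 m := by
        rw [← Finset.Ico_add_one_right_eq_Icc]
        congr 1
        omega
      rw [he, Finset.range_eq_Ico,
        ← Finset.sum_Ico_consecutive (fun d => d) (Nat.zero_le 1) hm]
      simp
    have h3 := Finset.sum_range_id_mul_two m
    omega
  -- Fact 2 : ∑ A(A-1) ≤ m(m-1)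
  have fact2 : ∑ t ∈ T, A t * (A t - 1) ≤ m * (m - 1) := by
    have hsplit : ∀ t, A t * (A t - 1)
        = (S.offDiag.filter (fun p => (p.1 ≤ t + 1 ∧ t + 2 ≤ p.1 + m)
            ∧ (p.2 ≤ t + 1 ∧ t + 2 ≤ p.2 + m))).card := by
      intro t
      have he : S.offDiag.filter (fun p => (p.1 ≤ t + 1 ∧ t + 2 ≤ p.1 + m)
            ∧ (p.2 ≤ t + 1 ∧ t + 2 ≤ p.2 + m))
          = (S.filter (fun s => s ≤ t + 1 ∧ t + 2 ≤ s + m)).offDiag := by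
        ext p
        simp only [Finset.mem_filter, Finset.mem_offDiag]
        tauto
      rw [he, Finset.offDiag_card]
      simp only [hA]
      rw [Nat.mul_sub, mul_one]
    set cnt : ℕ × ℕ → ℕ := fun p => (T.filter (fun t => (p.1 ≤ t + 1 ∧ t + 2 ≤ p.1 + m)
            ∧ (p.2 ≤ t + 1 ∧ t + 2 ≤ p.2 + m))).card with hcnt
    have hswap : ∑ t ∈ T, A t * (A t - 1) = ∑ p ∈ S.offDiag, cnt p := by
      simp only [hsplit, hcnt, Finset.card_filter]
      rw [Finset.sum_comm]
    rw [hswap]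
    have hcnt_le : ∀ p : ℕ × ℕ, p.1 ∈ S → p.2 ∈ S → p.2 < p.1 → cnt p ≤ m - (p.1 - p.2) := by
      intro p hp1 hp2 hlt
      obtain ⟨ha1, ha2⟩ := hmem _ hp1
      obtain ⟨hb1, hb2⟩ := hmem _ hp2
      have hsub : T.filter (fun t => (p.1 ≤ t + 1 ∧ t + 2 ≤ p.1 + m)
            ∧ (p.2 ≤ t + 1 ∧ t + 2 ≤ p.2 + m))
          ⊆ Finset.Icc (p.1 - 1) (p.2 + m - 2) := by
        intro t ht
        simp only [Finset.mem_filter, Finset.mem_range, hT] at ht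
        simp only [Finset.mem_Icc]
        omega
      calc cnt p ≤ (Finset.Icc (p.1 - 1) (p.2 + m - 2)).card := Finset.card_le_card hsub
        _ = p.2 + m - 2 + 1 - (p.1 - 1) := Nat.card_Icc _ _
        _ ≤ m - (p.1 - p.2) := by omega
    -- half-sum bound
    have half : ∀ H : Finset (ℕ × ℕ), H ⊆ S.offDiag → (∀ p ∈ H, p.2 < p.1) →
        ∑ p ∈ H, cnt p ≤ B := by
      intro H hHsub hHlt
      have hinj : Set.InjOn (fun p : ℕ × ℕ => p.1 - p.2) H := by
        intro p hp q hq hpq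
        simp only at hpq
        obtain ⟨hp1, hp2, -⟩ := Finset.mem_offDiag.mp (hHsub hp)
        obtain ⟨hq1, hq2, -⟩ := Finset.mem_offDiag.mp (hHsub hq)
        have hplt := hHlt p hp
        have hqlt := hHlt q hq
        have hadd : p.1 + q.2 = q.1 + p.2 := by omega
        rcases hsidon _ hp1 _ hq2 _ hq1 _ hp2 hadd with ⟨h1, h2⟩ | ⟨h1, h2⟩
        · exact Prod.ext h1 h2.symm
        · omega
      have step1 : ∑ p ∈ H, cnt p ≤ ∑ p ∈ H, (m - (p.1 - p.2)) := by
        apply Finset.sum_le_sum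
        intro p hp
        obtain ⟨hp1, hp2, -⟩ := Finset.mem_offDiag.mp (hHsub hp)
        exact hcnt_le p hp1 hp2 (hHlt p hp)
      have step2 : ∑ p ∈ H, (m - (p.1 - p.2))
          = ∑ d ∈ H.image (fun p : ℕ × ℕ => p.1 - p.2), (m - d) := by
        rw [Finset.sum_image (fun p hp q hq h => hinj hp hq h)]
      have step3 : ∑ d ∈ H.image (fun p : ℕ × ℕ => p.1 - p.2), (m - d) ≤ B := by
        rw [hB]
        set X := H.image (fun p : ℕ × ℕ => p.1 - p.2) with hX
        have hz : ∑ d ∈ X, (m - d) = ∑ d ∈ X.filter (fun d => d ≤ m - 1), (m - d) := by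
          rw [Finset.sum_filter_of_ne]
          intro d _ hd
          omega
        rw [hz]
        apply Finset.sum_le_sum_of_subset
        intro d hd
        simp only [Finset.mem_filter, hX, Finset.mem_image] at hd
        obtain ⟨⟨p, hp, hpd⟩, hdm⟩ := hd
        have := hHlt p hp
        simp only [Finset.mem_Icc]
        omega
      omega
    -- split into two halves
    have hsplit2 : ∑ p ∈ S.offDiag, cnt p
        = ∑ p ∈ S.offDiag.filter (fun p => p.2 < p.1), cnt p
          + ∑ p ∈ S.offDiag.filter (fun p => ¬ p.2 < p.1), cnt p :=
      (Finset.sum_filter_add_sum_filter_not _ _ _).symm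
    have hsnd : ∑ p ∈ S.offDiag.filter (fun p => ¬ p.2 < p.1), cnt p
        = ∑ p ∈ S.offDiag.filter (fun p => p.2 < p.1), cnt p := by
      apply Finset.sum_nbij' (fun p : ℕ × ℕ => (p.2, p.1)) (fun p : ℕ × ℕ => (p.2, p.1))
      · intro p hp
        simp only [Finset.mem_filter, Finset.mem_offDiag] at *
        obtain ⟨⟨h1, h2, h3⟩, h4⟩ := hp
        exact ⟨⟨h2, h1, by omega⟩, by omega⟩
      · intro p hp
        simp only [Finset.mem_filter, Finset.mem_offDiag] at *
        obtain ⟨⟨h1, h2, h3⟩, h4⟩ := hp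
        exact ⟨⟨h2, h1, by omega⟩, by omega⟩
      · intro p _; rfl
      · intro p _; rfl
      · intro p hp
        simp only [hcnt]
        congr 1
        ext t
        simp only [Finset.mem_filter]
        tauto
    have hfst := half (S.offDiag.filter (fun p => p.2 < p.1)) (Finset.filter_subset _ _)
      (fun p hp => (Finset.mem_filter.mp hp).2)
    omega
  -- Cauchy-Schwarz
  have hCS : (∑ t ∈ T, A t) ^ 2 ≤ T.card * ∑ t ∈ T, (A t) ^ 2 :=
    sq_sum_le_card_mul_sum_sq
  have hTcard : T.card = n + m - 1 := by rw [hT, Finset.card_range]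
  have hsum2 : ∑ t ∈ T, (A t) ^ 2 ≤ m * (m - 1) + k * m := by
    have : ∀ t, (A t) ^ 2 = A t * (A t - 1) + A t := by
      intro t
      cases' Nat.eq_zero_or_pos (A t) with h h
      · simp [h]
      · obtain ⟨j, hj⟩ := Nat.exists_eq_succ_of_ne_zero h.ne'
        rw [hj]
        simp [Nat.succ_sub_one]
        ring
    calc ∑ t ∈ T, (A t) ^ 2 = ∑ t ∈ T, (A t * (A t - 1) + A t) := by
          exact Finset.sum_congr rfl (fun t _ => this t)
      _ = (∑ t ∈ T, A t * (A t - 1)) + ∑ t ∈ T, A t := Finset.sum_add_distrib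
      _ ≤ m * (m - 1) + k * m := by rw [fact1]; omega
  have hfinal : (k * m) ^ 2 ≤ (n + m - 1) * (m * (m - 1) + k * m) := by
    calc (k * m) ^ 2 = (∑ t ∈ T, A t) ^ 2 := by rw [fact1]
      _ ≤ T.card * ∑ t ∈ T, (A t) ^ 2 := hCS
      _ ≤ (n + m - 1) * (m * (m - 1) + k * m) := by
          rw [hTcard]
          exact Nat.mul_le_mul_left _ hsum2
  have hfinal2 : k ^ 2 * m * m ≤ (n + m - 1) * (m - 1 + k) * m := by
    calc k ^ 2 * m * m = (k * m) ^ 2 := by ring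
      _ ≤ (n + m - 1) * (m * (m - 1) + k * m) := hfinal
      _ = (n + m - 1) * (m - 1 + k) * m := by ring
  exact Nat.le_of_mul_le_mul_right hfinal2 hm
/-- Cilleruelo's bound on the size of a Sidon set in {1,...,n}. -/
theorem stmt_4 (n : ℕ) (hn : 0 < n) (S : Finset ℕ) (hS : S ⊆ Finset.Icc 1 n)
    (hsidon : ∀ a ∈ S, ∀ b ∈ S, ∀ c ∈ S, ∀ d ∈ S,
      a + b = c + d → (a = c ∧ b = d) ∨ (a = d ∧ b = c)) :
    (S.card : ℝ) < Real.sqrt n + (n : ℝ) ^ ((1 : ℝ) / 4) + 1 / 2 := by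
  by_contra hcon
  push_neg at hcon
  set x : ℝ := (n : ℝ) ^ ((1 : ℝ) / 4) with hx
  have hn1 : (1 : ℝ) ≤ n := by exact_mod_cast hn
  have hx1 : 1 ≤ x := Real.one_le_rpow hn1 (by norm_num)
  have hx4 : x ^ 4 = n := by
    rw [hx, ← Real.rpow_natCast ((n : ℝ) ^ ((1 : ℝ) / 4)) 4,
      ← Real.rpow_mul (by positivity)]
    norm_num
  have hsqrt : Real.sqrt n = x ^ 2 := by
    rw [show ((n : ℝ)) = (x ^ 2) ^ 2 by rw [← hx4]; ring, Real.sqrt_sq (by positivity)]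
  set m : ℕ := ⌈x ^ 3⌉₊ with hm
  have hm1 : x ^ 3 ≤ m := Nat.le_ceil _
  have hm2 : (m : ℝ) < x ^ 3 + 1 := Nat.ceil_lt_add_one (by positivity)
  have hmpos : 0 < m := Nat.ceil_pos.mpr (by positivity)
  have key := sidon_key n m hn hmpos S hS hsidon
  set k : ℝ := (S.card : ℝ) with hkdef
  have hk : x ^ 2 + x + 1 / 2 ≤ k := by rw [hsqrt] at hcon; linarith
  have hcast : k ^ 2 * m ≤ ((n : ℝ) + m - 1) * ((m : ℝ) - 1 + k) := by
    have h1 := (Nat.cast_le (α := ℝ)).mpr key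
    have e1 : ((n + m - 1 : ℕ) : ℝ) = (n : ℝ) + m - 1 := by
      have h : (1 : ℕ) ≤ n + m := by omega
      rw [Nat.cast_sub h]; push_cast; ring
    have e2 : ((m - 1 + S.card : ℕ) : ℝ) = (m : ℝ) - 1 + k := by
      rw [Nat.cast_add, Nat.cast_sub hmpos]; push_cast [hkdef]; ring
    rw [Nat.cast_mul, Nat.cast_mul, Nat.cast_pow, e1, e2] at h1
    exact h1
  rw [← hx4] at hcast
  have hfac : 0 ≤ (k - (x ^ 2 + x + 1 / 2)) *
      ((m : ℝ) * (k + (x ^ 2 + x + 1 / 2)) - (x ^ 4 + m - 1)) := by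
    apply mul_nonneg (by linarith)
    nlinarith [hm1, hm2, hk, hx1, sq_nonneg x, pow_pos (lt_of_lt_of_le one_pos hx1) 3]
  nlinarith [hcast, hfac, hm1, hm2, hx1, hk, sq_nonneg (x - 1),
    mul_le_mul_of_nonneg_left hm1 (le_of_lt (lt_of_lt_of_le one_pos hx1)),
    pow_pos (lt_of_lt_of_le one_pos hx1) 3, pow_pos (lt_of_lt_of_le one_pos hx1) 2]
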